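/- arXiv:2310.12785 — 2 statements merged into one kernel-verified Lean document; each statement's English description precedes it below -/
import Mathlib

section
/- Let T*_a = {x ∈ Ω : p_{a,1}·f_{a,1}(x) ≥ p_{a,0}·f_{a,0}(x)} be the group Bayes classifiers and let D = T*_0 Δ T*_1 be their disagreement region. For any classifier T, the well-defined modification T' = (T ∩ D) ∪ (T*_0 ∩ Dᶜ), which agrees with T on D and with the common prediction of T*_0 and T*_1 outside D, satisfies Acc(T') ≥ Acc(T). -/
open MeasureTheory

/-- Accuracy of a classifier `T` (predicting label 1 exactly on `T`):
`Acc(T) = (1/2) Σ_a p_{a,1} ∫_T f_{a,1} dν + (1/2) Σ_a p_{a,0} ∫_{Tᶜ} f_{a,0} dν`.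
Groups and labels are indexed by `Bool` (`false = 0`, `true = 1`). -/
noncomputable def accuracy {Ω : Type*} [MeasurableSpace Ω] (ν : Measure Ω)
    (f : Bool → Bool → Ω → ℝ) (p : Bool → Bool → ℝ) (T : Set Ω) : ℝ :=
  (1/2) * (p false true * ∫ x in T, f false true x ∂ν
      + p true true * ∫ x in T, f true true x ∂ν)
  + (1/2) * (p false false * ∫ x in Tᶜ, f false false x ∂ν
      + p true false * ∫ x in Tᶜ, f true false x ∂ν)

/-- Let `T*_a = {x | p_{a,1} f_{a,1}(x) ≥ p_{a,0} f_{a,0}(x)}` be the group Bayes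
classifiers and `D = T*_0 Δ T*_1` their disagreement region. For any classifier `T`,
the well-defined modification `T' = (T ∩ D) ∪ (T*_0 ∩ Dᶜ)` satisfies
`Acc(T') ≥ Acc(T)`. -/
theorem welldefined_modification_improves_accuracy
    {Ω : Type*} [MeasurableSpace Ω] (ν : Measure Ω) [SigmaFinite ν]
    (f : Bool → Bool → Ω → ℝ) (p : Bool → Bool → ℝ)
    (hf_meas : ∀ a y, Measurable (f a y))
    (hf_nonneg : ∀ a y x, 0 ≤ f a y x)
    (hf_int : ∀ a y, Integrable (f a y) ν)
    (hf_one : ∀ a y, ∫ x, f a y x ∂ν = 1)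
    (hp_pos : ∀ a y, 0 < p a y)
    (hp_sum : p false false + p false true + p true false + p true true = 1)
    (Tstar : Bool → Set Ω)
    (hTstar : ∀ a, Tstar a = {x | p a false * f a false x ≤ p a true * f a true x})
    (D : Set Ω) (hD : D = symmDiff (Tstar false) (Tstar true))
    (T : Set Ω) (hT : MeasurableSet T)
    (T' : Set Ω) (hT' : T' = (T ∩ D) ∪ (Tstar false ∩ Dᶜ)) :
    accuracy ν f p T ≤ accuracy ν f p T' := by
  have hTsm : ∀ a, MeasurableSet (Tstar a) := by
    intro a
    rw [hTstar]
    exact measurableSet_le ((hf_meas a false).const_mul _) ((hf_meas a true).const_mul _)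
  have hDm : MeasurableSet D := by
    rw [hD, Set.symmDiff_def]
    exact ((hTsm false).diff (hTsm true)).union ((hTsm true).diff (hTsm false))
  have hT'm : MeasurableSet T' := by
    rw [hT']
    exact (hT.inter hDm).union ((hTsm false).inter hDm.compl)
  set g : Ω → ℝ := fun x =>
    (p false true * f false true x - p false false * f false false x)
    + (p true true * f true true x - p true false * f true false x) with hg
  have hgint : Integrable g ν := by
    apply Integrable.add <;> apply Integrable.sub <;>
      exact (hf_int _ _).const_mul _
  -- accuracy formula
  have key : ∀ S : Set Ω, MeasurableSet S →
      accuracy ν f p S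
        = (1/2)*(p false false + p true false) + (1/2) * ∫ x in S, g x ∂ν := by
    intro S hS
    have hc : ∀ a y, ∫ x in Sᶜ, f a y x ∂ν = 1 - ∫ x in S, f a y x ∂ν := by
      intro a y
      have h := integral_add_compl hS (hf_int a y)
      rw [hf_one a y] at h
      linarith
    have hadd : ∫ x in S, g x ∂ν =
        (p false true * ∫ x in S, f false true x ∂ν
          - p false false * ∫ x in S, f false false x ∂ν)
        + (p true true * ∫ x in S, f true true x ∂ν
          - p true false * ∫ x in S, f true false x ∂ν) := by
      have hi : ∀ a y, IntegrableOn (fun x => p a y * f a y x) S ν :=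
        fun a y => ((hf_int a y).const_mul _).integrableOn
      simp only [hg]
      have hi2 : ∀ a, IntegrableOn
          (fun x => p a true * f a true x - p a false * f a false x) S ν :=
        fun a => (hi a true).sub (hi a false)
      rw [integral_add (hi2 false) (hi2 true),
        integral_sub (hi false true) (hi false false),
        integral_sub (hi true true) (hi true false),
        integral_const_mul, integral_const_mul, integral_const_mul, integral_const_mul]
    rw [accuracy, hc, hc, hadd]; ring
  rw [key T hT, key T' hT'm]
  have hpos : ∀ x ∈ Tstar false ∩ Dᶜ, 0 ≤ g x := by
    intro x hx
    obtain ⟨hx0, hxD⟩ := hx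
    have hx1 : x ∈ Tstar true := by
      rw [hD, Set.mem_compl_iff, Set.mem_symmDiff] at hxD
      tauto
    rw [hTstar] at hx0 hx1
    simp only [Set.mem_setOf_eq] at hx0 hx1
    simp only [hg]
    linarith
  have hneg : ∀ x ∈ Dᶜ \ Tstar false, g x ≤ 0 := by
    intro x hx
    obtain ⟨hxD, hx0⟩ := hx
    have hx1 : x ∉ Tstar true := by
      rw [hD, Set.mem_compl_iff, Set.mem_symmDiff] at hxD
      tauto
    rw [hTstar] at hx0 hx1
    simp only [Set.mem_setOf_eq, not_le] at hx0 hx1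
    simp only [hg]
    linarith
  -- main inequality on integrals
  have main : ∫ x in T, g x ∂ν ≤ ∫ x in T', g x ∂ν := by
    have e1 : ∫ x in T, g x ∂ν
        = ∫ x in T ∩ D, g x ∂ν + ∫ x in T ∩ Dᶜ, g x ∂ν := by
      rw [← setIntegral_union (Disjoint.mono Set.inter_subset_right Set.inter_subset_right
          disjoint_compl_right) (hT.inter hDm.compl) hgint.integrableOn hgint.integrableOn,
        Set.inter_union_compl]
    have e2 : ∫ x in T', g x ∂ν
        = ∫ x in T ∩ D, g x ∂ν + ∫ x in Tstar false ∩ Dᶜ, g x ∂ν := by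
      rw [hT', setIntegral_union (Disjoint.mono Set.inter_subset_right Set.inter_subset_right
          disjoint_compl_right) ((hTsm false).inter hDm.compl) hgint.integrableOn
          hgint.integrableOn]
    rw [e1, e2]
    have step : ∫ x in T ∩ Dᶜ, g x ∂ν ≤ ∫ x in Tstar false ∩ Dᶜ, g x ∂ν := by
      have d1 : ∫ x in T ∩ Dᶜ, g x ∂ν
          = ∫ x in (T ∩ Dᶜ) ∩ Tstar false, g x ∂ν
            + ∫ x in (T ∩ Dᶜ) \ Tstar false, g x ∂ν := by
        rw [← setIntegral_union Set.disjoint_sdiff_inter.symm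
          (((hT.inter hDm.compl)).diff (hTsm false)) hgint.integrableOn hgint.integrableOn,
          Set.inter_union_diff]
      have d2 : ∫ x in Tstar false ∩ Dᶜ, g x ∂ν
          = ∫ x in (Tstar false ∩ Dᶜ) ∩ T, g x ∂ν
            + ∫ x in (Tstar false ∩ Dᶜ) \ T, g x ∂ν := by
        rw [← setIntegral_union Set.disjoint_sdiff_inter.symm
          ((((hTsm false).inter hDm.compl)).diff hT) hgint.integrableOn hgint.integrableOn,
          Set.inter_union_diff]
      have hsame : (T ∩ Dᶜ) ∩ Tstar false = (Tstar false ∩ Dᶜ) ∩ T := by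
        ext x; simp only [Set.mem_inter_iff]; tauto
      have h1 : ∫ x in (T ∩ Dᶜ) \ Tstar false, g x ∂ν ≤ 0 := by
        apply setIntegral_nonpos ((hT.inter hDm.compl).diff (hTsm false))
        intro x hx
        exact hneg x ⟨hx.1.2, hx.2⟩
      have h2 : 0 ≤ ∫ x in (Tstar false ∩ Dᶜ) \ T, g x ∂ν := by
        apply setIntegral_nonneg (((hTsm false).inter hDm.compl).diff hT)
        intro x hx
        exact hpos x hx.1
      rw [d1, d2, hsame]
      linarith
    linarith
  linarith
end

section
/- Fix weights ω_1, ω_2 ≥ 0, define λ(x) = ω_1·(f_{1,1}(x) − f_{0,1}(x)) − ω_2·(f_{1,0}(x) − f_{0,0}(x)) and T^f = {x ∈ Ω : λ(x) ≤ 0}. Then: (i) for every classifier T, ∫_{T^f} λ dν ≤ ∫_T λ dν; and (ii) if in addition TPR_1(T) ≥ TPR_0(T), TNR_1(T) ≥ TNR_0(T), TPR_1(T^f) ≥ TPR_0(T^f), and TNR_1(T^f) ≥ TNR_0(T^f), then the weighted unfairness satisfies F_U^ω(T^f) ≤ F_U^ω(T); i.e., T^f is the optimal classifier for fairness in this regime.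 -/
open MeasureTheory

/-- True positive rate of group `a` under classifier `T`: `TPR_a(T) = ∫_T f_{a,1} dν`. -/
noncomputable def tprOf {Ω : Type*} [MeasurableSpace Ω] (ν : Measure Ω)
    (f : Bool → Bool → Ω → ℝ) (a : Bool) (T : Set Ω) : ℝ :=
  ∫ x in T, f a true x ∂ν

/-- True negative rate of group `a` under classifier `T`: `TNR_a(T) = ∫_{Tᶜ} f_{a,0} dν`. -/
noncomputable def tnrOf {Ω : Type*} [MeasurableSpace Ω] (ν : Measure Ω)
    (f : Bool → Bool → Ω → ℝ) (a : Bool) (T : Set Ω) : ℝ :=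
  ∫ x in Tᶜ, f a false x ∂ν

/-- Weighted equalized-odds unfairness:
`F_U^ω(T) = ω₁|TPR₁(T) − TPR₀(T)| + ω₂|TNR₁(T) − TNR₀(T)|`. -/
noncomputable def wUnfairness {Ω : Type*} [MeasurableSpace Ω] (ν : Measure Ω)
    (f : Bool → Bool → Ω → ℝ) (ω₁ ω₂ : ℝ) (T : Set Ω) : ℝ :=
  ω₁ * |tprOf ν f true T - tprOf ν f false T|
    + ω₂ * |tnrOf ν f true T - tnrOf ν f false T|

/-- With `λ(x) = ω₁ (f₁₁(x) − f₀₁(x)) − ω₂ (f₁₀(x) − f₀₀(x))` and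
`T^f = {x | λ(x) ≤ 0}`: (i) `∫_{T^f} λ dν ≤ ∫_T λ dν` for every measurable `T`;
(ii) if the TPR and TNR orderings of the group rates are as specified for both `T`
and `T^f`, then `F_U^ω(T^f) ≤ F_U^ω(T)`. -/
theorem fairness_bayes_classifier
    {Ω : Type*} [MeasurableSpace Ω] (ν : Measure Ω) [SigmaFinite ν]
    (f : Bool → Bool → Ω → ℝ)
    (hf_meas : ∀ a y, Measurable (f a y))
    (hf_nonneg : ∀ a y x, 0 ≤ f a y x)
    (hf_int : ∀ a y, Integrable (f a y) ν)
    (hf_one : ∀ a y, ∫ x, f a y x ∂ν = 1)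
    (ω₁ ω₂ : ℝ) (hω₁ : 0 ≤ ω₁) (hω₂ : 0 ≤ ω₂)
    (lam : Ω → ℝ)
    (hlam : ∀ x, lam x = ω₁ * (f true true x - f false true x)
      - ω₂ * (f true false x - f false false x))
    (Tf : Set Ω) (hTf : Tf = {x | lam x ≤ 0}) :
    (∀ T : Set Ω, MeasurableSet T → ∫ x in Tf, lam x ∂ν ≤ ∫ x in T, lam x ∂ν) ∧
    (∀ T : Set Ω, MeasurableSet T →
      tprOf ν f false T ≤ tprOf ν f true T →
      tnrOf ν f false T ≤ tnrOf ν f true T →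
      tprOf ν f false Tf ≤ tprOf ν f true Tf →
      tnrOf ν f false Tf ≤ tnrOf ν f true Tf →
      wUnfairness ν f ω₁ ω₂ Tf ≤ wUnfairness ν f ω₁ ω₂ T) := by

  have hlam' : lam = fun x => ω₁ * (f true true x - f false true x)
      - ω₂ * (f true false x - f false false x) := funext hlam
  have hmeas_lam : Measurable lam := by
    rw [hlam']
    exact (measurable_const.mul ((hf_meas true true).sub (hf_meas false true))).sub
      (measurable_const.mul ((hf_meas true false).sub (hf_meas false false)))
  have hint_lam : Integrable lam ν := by
    rw [hlam']
    exact (((hf_int true true).sub (hf_int false true)).const_mul ω₁).sub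
      (((hf_int true false).sub (hf_int false false)).const_mul ω₂)
  have hTf_meas : MeasurableSet Tf := by
    rw [hTf]; exact measurableSet_le hmeas_lam measurable_const
  have part1 : ∀ T : Set Ω, MeasurableSet T → ∫ x in Tf, lam x ∂ν ≤ ∫ x in T, lam x ∂ν := by
    intro T hT
    have h1 : ∫ x in Tf, lam x ∂ν = ∫ x in Tf ∩ T, lam x ∂ν + ∫ x in Tf \ T, lam x ∂ν :=
      (integral_inter_add_diff hT hint_lam.integrableOn).symm
    have h2 : ∫ x in T, lam x ∂ν = ∫ x in T ∩ Tf, lam x ∂ν + ∫ x in T \ Tf, lam x ∂ν :=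
      (integral_inter_add_diff hTf_meas hint_lam.integrableOn).symm
    have hneg : ∫ x in Tf \ T, lam x ∂ν ≤ 0 := by
      apply setIntegral_nonpos (hTf_meas.diff hT)
      intro x hx
      have hx1 := hx.1
      rw [hTf] at hx1; exact hx1
    have hpos : 0 ≤ ∫ x in T \ Tf, lam x ∂ν := by
      apply setIntegral_nonneg (hT.diff hTf_meas)
      intro x hx
      have hx2 : ¬ lam x ≤ 0 := by rw [hTf] at hx; exact hx.2
      linarith [lt_of_not_ge hx2]
    rw [h1, h2, Set.inter_comm]
    linarith
  refine ⟨part1, ?_⟩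
  intro T hT h1 h2 h3 h4
  have key : ∀ S : Set Ω, MeasurableSet S →
      tprOf ν f false S ≤ tprOf ν f true S →
      tnrOf ν f false S ≤ tnrOf ν f true S →
      wUnfairness ν f ω₁ ω₂ S = ∫ x in S, lam x ∂ν := by
    intro S hS hp hn
    have hcompl : ∀ a, ∫ x in Sᶜ, f a false x ∂ν = 1 - ∫ x in S, f a false x ∂ν := by
      intro a
      have := integral_add_compl hS (hf_int a false)
      rw [hf_one a false] at this
      linarith
    have e : ∫ x in S, lam x ∂ν
        = ω₁ * ((∫ x in S, f true true x ∂ν) - ∫ x in S, f false true x ∂ν)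
          - ω₂ * ((∫ x in S, f true false x ∂ν) - ∫ x in S, f false false x ∂ν) := by
      have i1 : Integrable (fun x => ω₁ * (f true true x - f false true x)) (ν.restrict S) := by
        exact ((hf_int true true).integrableOn.sub (hf_int false true).integrableOn).const_mul ω₁
      have i2 : Integrable (fun x => ω₂ * (f true false x - f false false x)) (ν.restrict S) := by
        exact ((hf_int true false).integrableOn.sub (hf_int false false).integrableOn).const_mul ω₂
      rw [hlam']
      beta_reduce
      rw [integral_sub i1 i2, integral_const_mul, integral_const_mul,
        integral_sub (hf_int true true).integrableOn (hf_int false true).integrableOn,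
        integral_sub (hf_int true false).integrableOn (hf_int false false).integrableOn]
    unfold wUnfairness tprOf tnrOf at *
    rw [abs_of_nonneg (by linarith), abs_of_nonneg (by linarith), e,
      hcompl true, hcompl false]
    ring
  rw [key Tf hTf_meas h3 h4, key T hT h1 h2]
  exact part1 T hT
end
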